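/- Let G = P ⋊ K with P a finite p-group and K a cyclic p'-group acting faithfully on P. For γ ∈ Aut(G), set N = N_{G×G}(Δ_γ(P)) and N̄ = N/Δ_γ(P), where Δ_γ(P) = {(γ(y),y) : y ∈ P}. Then the second projection induces a split short exact sequence 1 → Z(P) → N̄ → K → 1, split by the map x ∈ K ↦ (γ(x), x)·Δ_γ(P). -/

import Mathlib

open Pointwise


/-- Let `G = P ⋊ K` with `P` a finite `p`-group and `K` a cyclic `p'`-group acting
faithfully on `P`. For `γ ∈ Aut(G)`, set `N = N_{G×G}(Δ_γ(P))` where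
`Δ_γ(P) = {(γ(y),y) : y ∈ P}`. Then the second projection (composed with the
projection `G → G/P ≅ K`) induces a split short exact sequence
`1 → Z(P) → N/Δ_γ(P) → K → 1`, split by `x ∈ K ↦ (γ(x), x)·Δ_γ(P)`:
`z ↦ (z,1)Δ_γ(P)` is an injection of `Z(P)` into `N/Δ_γ(P)`, its image is exactly
the kernel of the induced map, the induced map is surjective, and the section
`x ↦ (γ(x),x)` lands in `N`. -/
theorem twisted_diagonal_normalizer_ses {G : Type*} [Group G] [Finite G] (p : ℕ)
    [Fact p.Prime] (P K : Subgroup G) [P.Normal] (hPK : P ⊓ K = ⊥) (hsup : P ⊔ K = ⊤)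
    (hP : IsPGroup p P) (hKcyc : IsCyclic K) (hK : ¬ p ∣ Nat.card K)
    (hfaith : K ⊓ Subgroup.centralizer (P : Set G) = ⊥)
    (γ : G ≃* G) :
    (∀ z ∈ P ⊓ Subgroup.centralizer (P : Set G),
        (z, (1 : G)) ∈ Subgroup.normalizer (P.map (γ.toMonoidHom.prod (MonoidHom.id G)) : Set (G × G)) ∧
          ((z, (1 : G)) ∈ P.map (γ.toMonoidHom.prod (MonoidHom.id G)) ↔ z = 1)) ∧
    (∀ n ∈ Subgroup.normalizer (P.map (γ.toMonoidHom.prod (MonoidHom.id G)) : Set (G × G)),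
        (n.2 ∈ P ↔ ∃ z ∈ P ⊓ Subgroup.centralizer (P : Set G),
          ∃ d ∈ P.map (γ.toMonoidHom.prod (MonoidHom.id G)), n = (z, (1 : G)) * d)) ∧
    (∀ g : G, ∃ n ∈ Subgroup.normalizer (P.map (γ.toMonoidHom.prod (MonoidHom.id G)) : Set (G × G)),
        n.2 * g⁻¹ ∈ P) ∧
    (∀ x ∈ K, (γ x, x) ∈ Subgroup.normalizer (P.map (γ.toMonoidHom.prod (MonoidHom.id G)) : Set (G × G))) := by
  classical
  set Δ := P.map (γ.toMonoidHom.prod (MonoidHom.id G)) with hΔdef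
  -- `P` is a normal Sylow `p`-subgroup, hence characteristic; so `γ(P) = P`.
  have hmul : ((P : Set G) * (K : Set G)) = Set.univ := by
    rw [← Subgroup.normal_mul, hsup, Subgroup.coe_top]
  have hcomp : Subgroup.IsComplement' P K :=
    Subgroup.isComplement'_of_disjoint_and_mul_eq_univ (disjoint_iff.mpr hPK) hmul
  have hpind : ¬ p ∣ P.index := by
    rw [hcomp.symm.index_eq_card]; exact hK
  have hSnormal : (hP.toSylow hpind : Subgroup G).Normal := by
    rw [IsPGroup.toSylow_coe]; infer_instance
  have hchar := Sylow.characteristic_of_normal (hP.toSylow hpind) hSnormal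
  have hmapP : P.map γ.toMonoidHom = P := by
    have h := (Subgroup.characteristic_iff_map_eq.mp hchar) γ
    rwa [IsPGroup.toSylow_coe] at h
  have hγP : ∀ y ∈ P, γ y ∈ P := by
    intro y hy
    rw [← hmapP]
    exact Subgroup.mem_map.mpr ⟨y, hy, rfl⟩
  have hsurjP : ∀ w ∈ P, ∃ y ∈ P, γ y = w := by
    intro w hw
    rw [← hmapP] at hw
    obtain ⟨y, hy, h⟩ := Subgroup.mem_map.mp hw
    exact ⟨y, hy, h⟩
  -- membership criterion for the twisted diagonal
  have memΔ : ∀ a b : G, ((a, b) ∈ Δ ↔ b ∈ P ∧ a = γ b) := by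
    intro a b
    simp only [hΔdef, Subgroup.mem_map, MonoidHom.prod_apply, MonoidHom.id_apply,
      MulEquiv.coe_toMonoidHom, Prod.mk.injEq]
    constructor
    · rintro ⟨y, hy, h1, rfl⟩; exact ⟨hy, h1.symm⟩
    · rintro ⟨hb, rfl⟩; exact ⟨b, hb, rfl, rfl⟩
  -- the full twisted diagonal of `G` normalizes `Δ`
  have hA : ∀ g : G, (γ g, g) ∈ Subgroup.normalizer (Δ : Set (G × G)) := by
    intro g
    rw [Subgroup.mem_normalizer_iff]
    rintro ⟨a, b⟩
    have hconj : ((γ g, g) : G × G) * (a, b) * ((γ g, g) : G × G)⁻¹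
        = (γ g * a * (γ g)⁻¹, g * b * g⁻¹) := rfl
    rw [memΔ, hconj, memΔ]
    constructor
    · rintro ⟨hb, rfl⟩
      exact ⟨‹P.Normal›.conj_mem b hb g, by simp [map_mul, map_inv, mul_assoc]⟩
    · rintro ⟨hb, he⟩
      have hb' : b ∈ P := by
        have := ‹P.Normal›.conj_mem _ hb g⁻¹
        simpa [mul_assoc] using this
      refine ⟨hb', ?_⟩
      have he' : γ g * a * (γ g)⁻¹ = γ g * γ b * (γ g)⁻¹ := by
        rw [he]; simp [map_mul, map_inv, mul_assoc]
      have := mul_right_cancel he'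
      exact mul_left_cancel this
  -- central elements give normalizing elements
  have hB : ∀ z : G, z ∈ Subgroup.centralizer (P : Set G) → ((z, 1) : G × G) ∈ Subgroup.normalizer (Δ : Set (G × G)) := by
    intro z hz
    rw [Subgroup.mem_normalizer_iff]
    rintro ⟨a, b⟩
    have hconj : ((z, 1) : G × G) * (a, b) * ((z, 1) : G × G)⁻¹
        = (z * a * z⁻¹, b) := by
      simp [Prod.ext_iff]
    rw [memΔ, hconj, memΔ]
    constructor
    · rintro ⟨hb, rfl⟩
      refine ⟨hb, ?_⟩
      have hc := Subgroup.mem_centralizer_iff.mp hz (γ b) (hγP b hb)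
      rw [← hc, mul_inv_cancel_right]
    · rintro ⟨hb, he⟩
      refine ⟨hb, ?_⟩
      have hc := Subgroup.mem_centralizer_iff.mp hz (γ b) (hγP b hb)
      have : z * a * z⁻¹ = z * γ b * z⁻¹ := by rw [he, ← hc, mul_inv_cancel_right]
      have := mul_right_cancel this
      exact mul_left_cancel this
  -- conversely, a normalizing element of the form `(z,1)` has `z ∈ Z(P)`
  have hC : ∀ z : G, ((z, 1) : G × G) ∈ Subgroup.normalizer (Δ : Set (G × G)) →
      z ∈ P ⊓ Subgroup.centralizer (P : Set G) := by
    intro z hzn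
    have hcent : z ∈ Subgroup.centralizer (P : Set G) := by
      rw [Subgroup.mem_centralizer_iff]
      intro w hw
      obtain ⟨y, hy, rfl⟩ := hsurjP w hw
      have h1 : ((γ y, y) : G × G) ∈ Δ := (memΔ _ _).mpr ⟨hy, rfl⟩
      have h2 := (Subgroup.mem_normalizer_iff.mp hzn (γ y, y)).mp h1
      have hconj : ((z, 1) : G × G) * (γ y, y) * ((z, 1) : G × G)⁻¹
          = (z * γ y * z⁻¹, y) := by simp [Prod.ext_iff]
      rw [hconj] at h2
      obtain ⟨-, he⟩ := (memΔ _ _).mp h2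
      -- he : z * γ y * z⁻¹ = γ y
      have : z * γ y = γ y * z := by
        have := congrArg (· * z) he
        simpa [mul_assoc] using this
      exact this.symm
    refine Subgroup.mem_inf.mpr ⟨?_, hcent⟩
    -- write z = x * k with x ∈ P, k ∈ K, and show k = 1
    obtain ⟨x, hx, k, hk, rfl⟩ : ∃ x ∈ P, ∃ k ∈ K, x * k = z := by
      have : z ∈ ((P : Set G) * (K : Set G)) := by rw [hmul]; trivial
      exact Set.mem_mul.mp this
    have hcom : ∀ y ∈ P, k * y * k⁻¹ = x⁻¹ * y * x := by
      intro y hy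
      have h := Subgroup.mem_centralizer_iff.mp hcent y hy
      -- h : y * (x * k) = (x * k) * y
      have h2 : x * (k * y * k⁻¹) * k = x * (x⁻¹ * y * x) * k := by
        calc x * (k * y * k⁻¹) * k = (x * k) * y := by group
          _ = y * (x * k) := h.symm
          _ = x * (x⁻¹ * y * x) * k := by group
      exact mul_left_cancel (mul_right_cancel h2)
    have hpow : ∀ n : ℕ, ∀ y ∈ P, k ^ n * y * (k ^ n)⁻¹ = (x ^ n)⁻¹ * y * x ^ n := by
      intro n
      induction n with
      | zero => intro y _; simp
      | succ n ih =>
        intro y hy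
        have hy' : x⁻¹ * y * x ∈ P := P.mul_mem (P.mul_mem (P.inv_mem hx) hy) hx
        calc k ^ (n + 1) * y * (k ^ (n + 1))⁻¹
            = k ^ n * (k * y * k⁻¹) * (k ^ n)⁻¹ := by rw [pow_succ]; group
          _ = k ^ n * (x⁻¹ * y * x) * (k ^ n)⁻¹ := by rw [hcom y hy]
          _ = (x ^ n)⁻¹ * (x⁻¹ * y * x) * x ^ n := ih _ hy'
          _ = (x ^ (n + 1))⁻¹ * y * x ^ (n + 1) := by rw [pow_succ]; group
    -- orders: `orderOf x` is a power of `p`, `orderOf k` is prime to `p`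
    obtain ⟨j, hj⟩ := hP ⟨x, hx⟩
    have hordx : orderOf x ∣ p ^ j := by
      have : (⟨x, hx⟩ : P) ^ p ^ j = 1 := hj
      have h' : orderOf (⟨x, hx⟩ : P) ∣ p ^ j := orderOf_dvd_of_pow_eq_one this
      rwa [Subgroup.orderOf_mk] at h'
    have hordk : ¬ p ∣ orderOf k := fun hdvd =>
      hK (hdvd.trans (Subgroup.orderOf_dvd_natCard K hk))
    have hco : (orderOf x).Coprime (orderOf k) := by
      obtain ⟨i, -, hxi⟩ := (Nat.dvd_prime_pow (Fact.out : p.Prime)).mp hordx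
      rw [hxi]
      exact Nat.Coprime.pow_left i
        (((Fact.out : p.Prime).coprime_iff_not_dvd).mpr hordk)
    obtain ⟨N, hN1, hN2⟩ := Nat.chineseRemainder hco 0 1
    have hxN : x ^ N = 1 := by
      have : x ^ N = x ^ 0 := pow_eq_pow_iff_modEq.mpr hN1
      simpa using this
    have hkN : k ^ N = k := by
      have : k ^ N = k ^ 1 := pow_eq_pow_iff_modEq.mpr hN2
      simpa using this
    have hkcent : k ∈ Subgroup.centralizer (P : Set G) := by
      rw [Subgroup.mem_centralizer_iff]
      intro y hy
      have := hpow N y hy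
      rw [hkN, hxN] at this
      simp only [inv_one, one_mul, mul_one] at this
      have := congrArg (· * k) this
      simpa [mul_assoc] using this.symm
    have hk1 : k = 1 := by
      have : k ∈ K ⊓ Subgroup.centralizer (P : Set G) := Subgroup.mem_inf.mpr ⟨hk, hkcent⟩
      rwa [hfaith, Subgroup.mem_bot] at this
    rw [hk1, mul_one]
    exact hx
  refine ⟨?_, ?_, ?_, ?_⟩
  · -- injection of Z(P)
    intro z hz
    obtain ⟨hzP, hzc⟩ := Subgroup.mem_inf.mp hz
    refine ⟨hB z hzc, ?_⟩
    constructor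
    · intro h
      obtain ⟨-, he⟩ := (memΔ _ _).mp h
      simpa using he
    · rintro rfl
      exact (memΔ _ _).mpr ⟨P.one_mem, by simp⟩
  · -- exactness at the middle
    rintro ⟨a, b⟩ hn
    constructor
    · intro hb
      have hd : ((γ b, b) : G × G) ∈ Δ := (memΔ _ _).mpr ⟨hb, rfl⟩
      have hnd : ((a, b) : G × G) * ((γ b, b) : G × G)⁻¹ ∈ Subgroup.normalizer (Δ : Set (G × G)) :=
        mul_mem hn (inv_mem (Subgroup.le_normalizer hd))
      have hconj : ((a, b) : G × G) * ((γ b, b) : G × G)⁻¹ = (a * (γ b)⁻¹, 1) := by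
        simp [Prod.ext_iff]
      rw [hconj] at hnd
      refine ⟨a * (γ b)⁻¹, hC _ hnd, (γ b, b), hd, ?_⟩
      simp [Prod.ext_iff]
    · rintro ⟨z, hz, d, hd, he⟩
      obtain ⟨y, hy, rfl⟩ := Subgroup.mem_map.mp hd
      have : b = 1 * y := congrArg Prod.snd he
      rw [one_mul] at this
      rw [this]
      exact hy
  · -- surjectivity
    intro g
    obtain ⟨x, hx, k, hk, rfl⟩ : ∃ x ∈ P, ∃ k ∈ K, x * k = g := by
      have : g ∈ ((P : Set G) * (K : Set G)) := by rw [hmul]; trivial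
      exact Set.mem_mul.mp this
    refine ⟨(γ k, k), hA k, ?_⟩
    have : k * (x * k)⁻¹ = k * k⁻¹ * x⁻¹ := by group
    rw [show ((γ k, k) : G × G).2 = k from rfl, this]
    simpa using P.inv_mem hx
  · -- the section lands in the normalizer
    intro x _
    exact hA x
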